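/- Let q ≥ 1 and X = Fin q ⊕ Fin q, and let β be a pairing of X. A transverse pairing τ of X satisfies |τ∘β| = b_R(β) (i.e. achieves the minimum of |τ'∘β| over transverse pairings τ') if and only if both of the following hold: (i) for every x ∈ X such that β x lies on the side opposite to x, one has τ x = β x; and (ii) for every R-side x such that β x is also R-side, one has τ (β x) = β (τ x). -/

import Mathlib

/-- Number of cycles (orbits of the generated cyclic group, fixed points included). -/
noncomputable def permCycles {X : Type*} (σ : Equiv.Perm X) : ℕ :=
  Nat.card (MulAction.orbitRel.Quotient (Subgroup.zpowers σ) X)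

/-- The length `|σ| = card X - #σ` of a permutation. -/
noncomputable def permLength {X : Type*} (σ : Equiv.Perm X) : ℕ :=
  Nat.card X - permCycles σ

/-- A pairing of `X` is a fixed-point-free involution of `X`. -/
def IsPairing {X : Type*} (α : Equiv.Perm X) : Prop :=
  α * α = 1 ∧ ∀ x, α x ≠ x

/-- A pairing of `Fin q ⊕ Fin q` is transverse if it sends the L side to the R side. -/
def IsTransverse {q : ℕ} (τ : Equiv.Perm (Fin q ⊕ Fin q)) : Prop :=
  ∀ i : Fin q, (τ (Sum.inl i)).isRight

/-- `b_R(β)`: the number of R-side elements paired to R-side elements (twice the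
number of bumps of `β`). -/
def bR {q : ℕ} (β : Equiv.Perm (Fin q ⊕ Fin q)) : ℕ :=
  (Finset.univ.filter fun i : Fin q => (β (Sum.inr i)).isRight).card
section helpers

private lemma pairing_sq {X : Type*} {α : Equiv.Perm X} (h : IsPairing α) (x : X) :
    α (α x) = x := by
  have := congrArg (fun f : Equiv.Perm X => f x) h.1
  simpa [Equiv.Perm.mul_apply] using this

private lemma transverse_flip {q : ℕ} {τ : Equiv.Perm (Fin q ⊕ Fin q)} (hτ : IsPairing τ)
    (hτt : IsTransverse τ) : ∀ x, (τ x).isRight = !x.isRight := by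
  have hτ2 : ∀ x, τ (τ x) = x := pairing_sq hτ
  choose g hg using fun j => Sum.isRight_iff.mp (hτt j)
  have hginj : Function.Injective g := by
    intro a b hab
    have : τ (Sum.inl a) = τ (Sum.inl b) := by rw [hg a, hg b, hab]
    simpa using τ.injective this
  have hgsurj : Function.Surjective g := Finite.injective_iff_surjective.mp hginj
  intro x
  cases x with
  | inl i => simp [hτt i]
  | inr i =>
      obtain ⟨j, hj⟩ := hgsurj i
      have : τ (Sum.inr i) = Sum.inl j := by rw [← hj, ← hg j, hτ2]
      simp [this]

end helpers
theorem stmt7 (q : ℕ) (hq : 1 ≤ q) (β τ : Equiv.Perm (Fin q ⊕ Fin q))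
    (hβ : IsPairing β) (hτ : IsPairing τ) (hτt : IsTransverse τ) :
    permLength (τ * β) = bR β ↔
      ((∀ x : Fin q ⊕ Fin q, (β x).isRight ≠ x.isRight → τ x = β x) ∧
       (∀ x : Fin q ⊕ Fin q, x.isRight → (β x).isRight → τ (β x) = β (τ x))) := by
  classical
  have hβ2 : ∀ x, β (β x) = x := pairing_sq hβ
  have hτ2 : ∀ x, τ (τ x) = x := pairing_sq hτ
  have hflip : ∀ x, (τ x).isRight = !x.isRight := transverse_flip hτ hτt
  set σ : Equiv.Perm (Fin q ⊕ Fin q) := τ * β with hσdef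
  have hσ : ∀ x, σ x = τ (β x) := fun x => rfl
  have hσinv : ∀ x, σ⁻¹ x = β (τ x) := by
    intro x
    apply σ.injective
    rw [show σ (σ⁻¹ x) = x from σ.apply_symm_apply x, hσ, hβ2, hτ2]
  let Q := MulAction.orbitRel.Quotient (Subgroup.zpowers σ) (Fin q ⊕ Fin q)
  let P : Fin q ⊕ Fin q → Prop := fun x => x.isRight = false ∨ (β x).isRight = false
  have hmk : ∀ x, (Quotient.mk'' (σ x) : Q) = Quotient.mk'' x :=
    fun x => Quotient.sound' ⟨⟨σ, Subgroup.mem_zpowers σ⟩, rfl⟩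
  have hmkinv : ∀ x, (Quotient.mk'' (σ⁻¹ x) : Q) = Quotient.mk'' x :=
    fun x => Quotient.sound' ⟨⟨σ⁻¹, (Subgroup.zpowers σ).inv_mem (Subgroup.mem_zpowers σ)⟩, rfl⟩
  have hext : ∀ x y, (Quotient.mk'' x : Q) = Quotient.mk'' y → ∃ k : ℤ, (σ ^ k) y = x := by
    intro x y h
    have h2 := Quotient.eq''.mp h
    rw [MulAction.orbitRel_apply, MulAction.mem_orbit_iff] at h2
    obtain ⟨⟨g, hg⟩, hgx⟩ := h2
    obtain ⟨k, rfl⟩ := Subgroup.mem_zpowers_iff.mp hg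
    exact ⟨k, hgx⟩
  let f : {x // P x} → Q := fun x => Quotient.mk'' x.1
  have hnot : ∀ y, ¬ P y → y.isRight = true ∧ (β y).isRight = true := by
    intro y hy
    simpa [P, not_or] using hy
  have hfsurj : Function.Surjective f := by
    intro c
    induction c using Quotient.inductionOn' with
    | h y =>
      by_cases hy : P y
      · exact ⟨⟨y, hy⟩, rfl⟩
      · refine ⟨⟨σ y, Or.inl ?_⟩, hmk y⟩
        rw [hσ, hflip, (hnot y hy).2]
        rfl
  have hcardB : (Finset.univ.filter fun x : Fin q ⊕ Fin q => ¬ P x).card = bR β := by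
    have he : (Finset.univ.filter fun x : Fin q ⊕ Fin q => ¬ P x)
        = (Finset.univ.filter fun i : Fin q => (β (Sum.inr i)).isRight).map
          ⟨Sum.inr, Sum.inr_injective⟩ := by
      ext x
      cases x with
      | inl i => simp [P]
      | inr i => simp [P]
    rw [he, Finset.card_map, bR]
  have hcardB2 : Fintype.card {x // ¬ P x} = bR β := by
    rw [Fintype.card_subtype]; exact hcardB
  letI : Fintype Q := Fintype.ofFinite Q
  have hcardS : Fintype.card {x // P x} = 2 * q - bR β := by
    have h2 : Fintype.card {x // ¬ P x}
        = Fintype.card (Fin q ⊕ Fin q) - Fintype.card {x // P x} :=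
      Fintype.card_subtype_compl P
    have h3 : Fintype.card {x // P x} ≤ Fintype.card (Fin q ⊕ Fin q) :=
      Fintype.card_subtype_le P
    simp only [Fintype.card_sum, Fintype.card_fin] at h2 h3
    omega
  have hbRle : bR β ≤ 2 * q := by
    have h3 : Fintype.card {x // ¬ P x} ≤ Fintype.card (Fin q ⊕ Fin q) :=
      Fintype.card_subtype_le _
    simp only [Fintype.card_sum, Fintype.card_fin] at h3
    omega
  have hQle : Fintype.card Q ≤ Fintype.card {x // P x} :=
    Fintype.card_le_of_surjective f hfsurj
  have hperm : permLength σ = 2 * q - Fintype.card Q := by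
    show Nat.card (Fin q ⊕ Fin q) - permCycles σ = 2 * q - Fintype.card Q
    have h1 : Nat.card (Fin q ⊕ Fin q) = 2 * q := by
      simp [Nat.card_eq_fintype_card]; omega
    have h2 : permCycles σ = Fintype.card Q := Nat.card_eq_fintype_card
    rw [h1, h2]
  have key : permLength σ = bR β ↔ Function.Injective f := by
    rw [hperm]
    constructor
    · intro h
      have hcard : Fintype.card {x // P x} = Fintype.card Q := by omega
      exact ((Fintype.bijective_iff_surjective_and_card f).mpr ⟨hfsurj, hcard⟩).injective
    · intro hinj
      have := Fintype.card_of_bijective (f := f) ⟨hinj, hfsurj⟩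
      omega
  rw [key]
  constructor
  · intro hinj
    have hinj' : ∀ x y, P x → P y → (Quotient.mk'' x : Q) = Quotient.mk'' y → x = y := by
      intro x y hx hy h
      exact congrArg Subtype.val (hinj (a₁ := ⟨x, hx⟩) (a₂ := ⟨y, hy⟩) h)
    have k0' : ∀ x, x.isRight = false → (β x).isRight = true → σ x = x := by
      intro x hx hbx
      have hPσx : P (σ x) := Or.inl (by rw [hσ, hflip, hbx]; rfl)
      exact hinj' (σ x) x hPσx (Or.inl hx) (hmk x)
    constructor
    · intro x hx
      cases hxx : x.isRight with
      | false =>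
          have hbx : (β x).isRight = true := by
            cases hbb : (β x).isRight with
            | false => exact absurd (hbb.trans hxx.symm) hx
            | true => rfl
          have h1 : τ (β x) = x := (hσ x).symm.trans (k0' x hxx hbx)
          have h2 := congrArg τ h1
          rw [hτ2] at h2
          exact h2.symm
      | true =>
          have hbx : (β x).isRight = false := by
            cases hbb : (β x).isRight with
            | false => rfl
            | true => exact absurd (hbb.trans hxx.symm) hx
          have h1 : τ (β (β x)) = β x := (hσ (β x)).symm.trans (k0' (β x) hbx (by rw [hβ2, hxx]))
          rw [hβ2] at h1
          exact h1
    · intro x hxr hbxr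
      have hσxL : (σ x).isRight = false := by rw [hσ, hflip, hbxr]; rfl
      have hPσx : P (σ x) := Or.inl hσxL
      have hnotP2 : ¬ P (σ (σ x)) := by
        intro hP
        have heq := hinj' (σ (σ x)) (σ x) hP hPσx (hmk (σ x))
        have hxx := σ.injective heq
        rw [hxx] at hσxL
        exact absurd (hxr.symm.trans hσxL) (by decide)
      have h34 := hnot _ hnotP2
      have hu : β (σ x) = τ (σ (σ x)) := by
        have h5 := congrArg τ (hσ (σ x))
        rw [hτ2] at h5
        exact h5.symm
      have huL : (β (σ x)).isRight = false := by rw [hu, hflip, h34.1]; rfl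
      have hPu : P (β (σ x)) := Or.inl huL
      have hPv : P (σ (β x)) := Or.inl (by rw [hσ, hβ2, hflip, hxr]; rfl)
      have hco : β (σ x) = σ⁻¹ (β x) := by rw [hσinv, hσ]
      have hclass : (Quotient.mk'' (β (σ x)) : Q) = Quotient.mk'' (σ (β x)) := by
        rw [hco, hmkinv, hmk]
      have heq2 := hinj' _ _ hPu hPv hclass
      have e1 : β (σ x) = τ x := by rw [heq2, hσ, hβ2]
      have e2 := congrArg β e1
      rw [hβ2] at e2
      rw [← e2]
      exact (hσ x).symm
  · rintro ⟨hi, hii⟩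
    have k0 : ∀ x : Fin q ⊕ Fin q, (β x).isRight ≠ x.isRight → σ x = x := by
      intro x hx
      have hb : (β (β x)).isRight ≠ (β x).isRight := by
        rw [hβ2]; exact fun h => hx h.symm
      have h1 := hi (β x) hb
      rw [hβ2] at h1
      rw [hσ]; exact h1
    have k3 : ∀ x : Fin q ⊕ Fin q, x.isRight = true → (β x).isRight = true → σ (σ x) = x := by
      intro x h1 h2
      have h3 := hii x h1 h2
      have h4 : σ (σ x) = τ (β (τ (β x))) := by rw [hσ, hσ]
      rw [h4, h3, hβ2, hτ2]
    have k4 : ∀ x : Fin q ⊕ Fin q, x.isRight = false → (β x).isRight = false →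
        σ (σ x) = x ∧ ¬ P (σ x) := by
      intro x h1 h2
      have hσxR : (σ x).isRight = true := by rw [hσ, hflip, h2]; rfl
      have hβσxR : (β (σ x)).isRight = true := by
        by_contra hc
        have hc' : (β (σ x)).isRight = false := by simpa using hc
        have h5 : σ (σ x) = σ x := k0 (σ x) (by rw [hc', hσxR]; exact (by decide))
        have hxx := σ.injective h5
        rw [hxx, h1] at hσxR
        exact absurd hσxR (by decide)
      refine ⟨σ.injective (k3 (σ x) hσxR hβσxR), ?_⟩
      intro hP
      rcases hP with h | h
      · rw [hσxR] at h; exact absurd h (by decide)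
      · rw [hβσxR] at h; exact absurd h (by decide)
    have hσ2 : ∀ x, σ (σ x) = x := by
      intro x
      cases h1 : x.isRight with
      | false =>
        cases h2 : (β x).isRight with
        | false => exact (k4 x h1 h2).1
        | true =>
          have h5 := k0 x (by rw [h2, h1]; decide)
          rw [h5, h5]
      | true =>
        cases h2 : (β x).isRight with
        | false =>
          have h5 := k0 x (by rw [h2, h1]; exact (by decide))
          rw [h5, h5]
        | true => exact k3 x h1 h2
    have hσmul : σ * σ = 1 := Equiv.ext hσ2
    have hσinv2 : σ⁻¹ = σ := inv_eq_of_mul_eq_one_right hσmul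
    have hpow : ∀ (k : ℤ) (x : Fin q ⊕ Fin q), (σ ^ k) x = x ∨ (σ ^ k) x = σ x := by
      intro k
      induction k using Int.induction_on with
      | zero => intro x; left; simp
      | succ n ih =>
        intro x
        have hstep : (σ ^ ((n : ℤ) + 1)) x = σ ((σ ^ (n : ℤ)) x) := by
          rw [add_comm, zpow_add, zpow_one, Equiv.Perm.mul_apply]
        rcases ih x with h | h
        · right; rw [hstep, h]
        · left; rw [hstep, h, hσ2]
      | pred n ih =>
        intro x
        have hstep : (σ ^ (-(n : ℤ) - 1)) x = σ ((σ ^ (-(n : ℤ))) x) := by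
          rw [sub_eq_add_neg, add_comm (-(n:ℤ)) (-1 : ℤ), zpow_add, zpow_neg_one, hσinv2,
            Equiv.Perm.mul_apply]
        rcases ih x with h | h
        · right; rw [hstep, h]
        · left; rw [hstep, h, hσ2]
    rintro ⟨x, hx⟩ ⟨y, hy⟩ hab
    apply Subtype.ext
    show x = y
    obtain ⟨k, hk⟩ := hext x y hab
    rcases hpow k y with h | h
    · exact hk.symm.trans h
    · have hxy : x = σ y := hk.symm.trans h
      cases h1 : y.isRight with
      | false =>
        cases h2 : (β y).isRight with
        | false =>
          exfalso
          rw [hxy] at hx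
          exact (k4 y h1 h2).2 hx
        | true => rw [hxy, k0 y (by rw [h2, h1]; decide)]
      | true =>
        cases h2 : (β y).isRight with
        | false => rw [hxy, k0 y (by rw [h2, h1]; exact (by decide))]
        | true =>
          exfalso
          rcases hy with h5 | h5
          · rw [h1] at h5; exact absurd h5 (by decide)
          · rw [h2] at h5; exact absurd h5 (by decide)
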